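/- For every action j ∈ Fin K and every horizon T, (γ/K)·∑_{t=0}^{T−1} x_t(j) − log K ≤ ((γ/K)/(1−γ))·∑_{t=0}^{T−1} ∑_{i} p_t(i)·x_t(i) + ((e−2)·(γ/K)²/(1−γ))·∑_{t=0}^{T−1} ∑_{i} p_t(i)·(x_t(i))², where e = exp(1). -/

import Mathlib

lemma exp_quad_bound {z : ℝ} (hz0 : 0 ≤ z) (hz1 : z ≤ 1) :
    Real.exp z ≤ 1 + z + (Real.exp 1 - 2) * z ^ 2 := by
  have hexp : ∀ y : ℝ, Real.exp y = ∑' n : ℕ, y ^ n / n.factorial := by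
    intro y
    rw [Real.exp_eq_exp_ℝ, NormedSpace.exp_eq_tsum_div]
  have hsum : ∀ y : ℝ, Summable (fun n : ℕ => y ^ n / n.factorial) :=
    Real.summable_pow_div_factorial
  have htail : ∀ y : ℝ, Real.exp y = 1 + y + ∑' n : ℕ, y ^ (n + 2) / (n + 2).factorial := by
    intro y
    have h := Summable.sum_add_tsum_nat_add (f := fun n : ℕ => y ^ n / n.factorial) 2 (hsum y)
    rw [hexp y, ← h, Finset.sum_range_succ, Finset.sum_range_one]
    norm_num
  have hsum2 : ∀ y : ℝ, Summable (fun n : ℕ => y ^ (n + 2) / (n + 2).factorial) := by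
    intro y
    exact (summable_nat_add_iff 2).2 (hsum y)
  have hle : (∑' n : ℕ, z ^ (n + 2) / (n + 2).factorial)
      ≤ ∑' n : ℕ, z ^ 2 * ((1:ℝ) ^ (n + 2) / (n + 2).factorial) := by
    refine Summable.tsum_le_tsum (fun n => ?_) (hsum2 z) ((hsum2 1).mul_left _)
    have hzn : z ^ (n + 2) ≤ z ^ 2 := by
      calc z ^ (n + 2) = z ^ 2 * z ^ n := by ring
        _ ≤ z ^ 2 * 1 := mul_le_mul_of_nonneg_left (pow_le_one₀ hz0 hz1) (sq_nonneg z)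
        _ = z ^ 2 := mul_one _
    rw [one_pow, mul_div_assoc', mul_one]
    gcongr
  have he : (∑' n : ℕ, (1:ℝ) ^ (n + 2) / (n + 2).factorial) = Real.exp 1 - 2 := by
    have h1 := htail 1
    simp only [one_pow] at h1 ⊢
    linarith
  have hz := htail z
  rw [tsum_mul_left, he] at hle
  nlinarith [hle]

open Finset in
theorem exp3_bwk_potential_bound
    (K : ℕ) (hK : 1 ≤ K) (γ : ℝ) (hγ0 : 0 < γ) (hγ1 : γ < 1)
    (x : ℕ → Fin K → ℝ)
    (hx0 : ∀ t i, 0 ≤ x t i)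
    (hx1 : ∀ t i, (γ / K) * x t i ≤ 1)
    (w : ℕ → Fin K → ℝ)
    (hw0 : ∀ i, w 0 i = 1)
    (hwrec : ∀ t i, w (t + 1) i = w t i * Real.exp ((γ / K) * x t i))
    (p : ℕ → Fin K → ℝ)
    (hp : ∀ t i, p t i = (1 - γ) * w t i / (∑ j, w t j) + γ / K)
    (j : Fin K) (T : ℕ) :
    (γ / K) * (∑ t ∈ range T, x t j) - Real.log K ≤
      ((γ / K) / (1 - γ)) * ∑ t ∈ range T, ∑ i, p t i * x t i
        + ((Real.exp 1 - 2) * (γ / K) ^ 2 / (1 - γ)) *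
            ∑ t ∈ range T, ∑ i, p t i * (x t i) ^ 2 := by
  have hKpos : (0:ℝ) < K := by
    have : (1:ℝ) ≤ K := by exact_mod_cast hK
    linarith
  set c : ℝ := γ / K with hc
  have hc0 : 0 ≤ c := by positivity
  have h1γ : 0 < 1 - γ := by linarith
  have he2 : (0:ℝ) ≤ Real.exp 1 - 2 := by
    nlinarith [Real.add_one_le_exp (1:ℝ)]
  have hwpos : ∀ t i, 0 < w t i := by
    intro t
    induction t with
    | zero => intro i; rw [hw0]; norm_num
    | succ t ih => intro i; rw [hwrec]; exact mul_pos (ih i) (Real.exp_pos _)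
  have hWpos : ∀ t, 0 < ∑ i, w t i := fun t =>
    Finset.sum_pos (fun i _ => hwpos t i) ⟨j, Finset.mem_univ j⟩
  have hppos : ∀ t i, 0 ≤ p t i := by
    intro t i
    rw [hp]
    have h1 : 0 ≤ (1 - γ) * w t i / (∑ j, w t j) :=
      div_nonneg (mul_nonneg h1γ.le (hwpos t i).le) (hWpos t).le
    have h2 : 0 ≤ γ / (K:ℝ) := by positivity
    linarith
  have hwp : ∀ t i, w t i ≤ p t i / (1 - γ) * (∑ i, w t i) := by
    intro t i
    rw [hp]
    have hW := hWpos t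
    have key : ((1 - γ) * w t i / (∑ j, w t j) + γ / K) / (1 - γ) * (∑ j, w t j)
        = w t i + (γ / K) / (1 - γ) * (∑ j, w t j) := by
      field_simp
    rw [key]
    have : 0 ≤ (γ / K) / (1 - γ) * (∑ j, w t j) :=
      mul_nonneg (div_nonneg (by positivity) h1γ.le) hW.le
    linarith
  -- per-step bound
  have step : ∀ t, Real.log (∑ i, w (t+1) i) - Real.log (∑ i, w t i) ≤
      (c / (1 - γ)) * (∑ i, p t i * x t i)
        + ((Real.exp 1 - 2) * c ^ 2 / (1 - γ)) * (∑ i, p t i * x t i ^ 2) := by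
    intro t
    have hWp := hWpos t
    set W := ∑ i, w t i with hWdef
    set A := ∑ i, p t i * x t i with hAdef
    set B := ∑ i, p t i * x t i ^ 2 with hBdef
    have hA0 : 0 ≤ A := Finset.sum_nonneg fun i _ => mul_nonneg (hppos t i) (hx0 t i)
    have hB0 : 0 ≤ B := Finset.sum_nonneg fun i _ => mul_nonneg (hppos t i) (sq_nonneg _)
    set u : ℝ := (c / (1 - γ)) * A + ((Real.exp 1 - 2) * c ^ 2 / (1 - γ)) * B with hudef
    have hu0 : 0 ≤ u := by
      apply add_nonneg
      · exact mul_nonneg (div_nonneg hc0 h1γ.le) hA0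
      · exact mul_nonneg (div_nonneg (mul_nonneg he2 (sq_nonneg _)) h1γ.le) hB0
    have hbound : (∑ i, w (t+1) i) ≤ W * (1 + u) := by
      have h1 : ∀ i, w (t+1) i
          ≤ w t i + (c * x t i + (Real.exp 1 - 2) * (c * x t i) ^ 2) * w t i := by
        intro i
        rw [hwrec]
        have hkey := exp_quad_bound (mul_nonneg hc0 (hx0 t i)) (hx1 t i)
        nlinarith [hwpos t i, hkey]
      calc (∑ i, w (t+1) i)
          ≤ ∑ i, (w t i + (c * x t i + (Real.exp 1 - 2) * (c * x t i) ^ 2) * w t i) :=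
            Finset.sum_le_sum fun i _ => h1 i
        _ = W + ∑ i, (c * x t i + (Real.exp 1 - 2) * (c * x t i) ^ 2) * w t i := by
            rw [Finset.sum_add_distrib]
        _ ≤ W + ∑ i, (c * x t i + (Real.exp 1 - 2) * (c * x t i) ^ 2)
              * (p t i / (1 - γ) * W) := by
            gcongr with i
            · exact add_nonneg (mul_nonneg hc0 (hx0 t i)) (mul_nonneg he2 (sq_nonneg _))
            · exact hwp t i
        _ = W * (1 + u) := by
            have hterm : ∀ i ∈ Finset.univ,
                (c * x t i + (Real.exp 1 - 2) * (c * x t i) ^ 2) * (p t i / (1 - γ) * W)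
                = W * (c / (1 - γ)) * (p t i * x t i)
                  + W * ((Real.exp 1 - 2) * c ^ 2 / (1 - γ)) * (p t i * x t i ^ 2) := by
              intro i _
              field_simp
            rw [Finset.sum_congr rfl hterm, Finset.sum_add_distrib, ← Finset.mul_sum,
              ← Finset.mul_sum, ← hAdef, ← hBdef, hudef]
            ring
    have hu1 : (0:ℝ) < 1 + u := by linarith
    have hlog : Real.log (∑ i, w (t+1) i) ≤ Real.log W + u := by
      calc Real.log (∑ i, w (t+1) i) ≤ Real.log (W * (1 + u)) := by
            apply Real.log_le_log (hWpos (t+1)) hbound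
        _ = Real.log W + Real.log (1 + u) := Real.log_mul hWp.ne' hu1.ne'
        _ ≤ Real.log W + u := by
            have := Real.log_le_sub_one_of_pos hu1
            linarith
    linarith [hlog]
  -- telescoping
  have htel : Real.log (∑ i, w T i) - Real.log (∑ i, w 0 i) ≤
      (c / (1 - γ)) * ∑ t ∈ range T, ∑ i, p t i * x t i
        + ((Real.exp 1 - 2) * c ^ 2 / (1 - γ)) * ∑ t ∈ range T, ∑ i, p t i * x t i ^ 2 := by
    have hts := Finset.sum_range_sub (fun t => Real.log (∑ i, w t i)) T
    calc Real.log (∑ i, w T i) - Real.log (∑ i, w 0 i)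
        = ∑ t ∈ range T, (Real.log (∑ i, w (t+1) i) - Real.log (∑ i, w t i)) := hts.symm
      _ ≤ ∑ t ∈ range T, ((c / (1 - γ)) * (∑ i, p t i * x t i)
            + ((Real.exp 1 - 2) * c ^ 2 / (1 - γ)) * (∑ i, p t i * x t i ^ 2)) :=
          Finset.sum_le_sum fun t _ => step t
      _ = _ := by
          rw [Finset.sum_add_distrib, ← Finset.mul_sum, ← Finset.mul_sum]
  -- lower bound on log of final weight of arm j
  have hwTj : ∀ S : ℕ, w S j = Real.exp (c * ∑ t ∈ range S, x t j) := by
    intro S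
    induction S with
    | zero => simp [hw0]
    | succ n ih =>
        rw [hwrec, ih, Finset.sum_range_succ, mul_add, Real.exp_add]
  have hlhs : c * ∑ t ∈ range T, x t j = Real.log (w T j) := by
    rw [hwTj T, Real.log_exp]
  have hwjW : Real.log (w T j) ≤ Real.log (∑ i, w T i) := by
    apply Real.log_le_log (hwpos T j)
    exact Finset.single_le_sum (fun i _ => (hwpos T i).le) (Finset.mem_univ j)
  have hW0 : Real.log (∑ i, w 0 i) = Real.log K := by
    have : (∑ i, w 0 i) = (K:ℝ) := by
      simp [hw0]
    rw [this]
  rw [hW0] at htel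
  linarith
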